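/- Let F be a field and let L be a left Leibniz algebra over F with dim_F L = 3 which is not a Lie algebra. Assume ζ(L) = 0 and dim_F Leib(L) = 2. Then there exists a basis (a1, a2, a3) of L such that the bracket is given by one of the following multiplication tables (all brackets of basis vectors not listed being zero): (i) [a1,a1] = [a1,a2] = a2 and [a1,a3] = β·a3 for some β ∈ F, β ≠ 0; (ii) [a1,a1] = a2, [a1,a2] = a2 + γ·a3 (γ ≠ 0), [a1,a3] = β·a3 (β ≠ 0); (iii) [a1,a1] = a2, [a1,a2] = γ·a3 (γ ≠ 0), [a1,a3] = a3; (iv) [a1,a1] = a2, [a1,a2] = a3, [a1,a3] = β·a2 + γ·a3 for some β, γ ∈ F such that the polynomial X² − γX − β is irreducible over F. -/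

import Mathlib

open Module Polynomial

variable {F L : Type*} [Field F] [AddCommGroup L] [Module F L]

/-- The left Leibniz identity for a bilinear bracket. -/
def IsLeibniz (β : L →ₗ[F] L →ₗ[F] L) : Prop :=
  ∀ a b c : L, β (β a b) c = β a (β b c) - β b (β a c)

/-- The Leibniz kernel `Leib(L)`: the subspace spanned by all squares `[a,a]`. -/
def leibKer (β : L →ₗ[F] L →ₗ[F] L) : Submodule F L :=
  Submodule.span F (Set.range fun a => β a a)

/-- The center `ζ(L)` of a Leibniz algebra. -/
def lzCenter (β : L →ₗ[F] L →ₗ[F] L) : Submodule F L where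
  carrier := {x | ∀ y, β x y = 0 ∧ β y x = 0}
  add_mem' := by
    intro a b ha hb y
    refine ⟨?_, ?_⟩
    · rw [map_add, LinearMap.add_apply, (ha y).1, (hb y).1, add_zero]
    · rw [map_add, (ha y).2, (hb y).2, add_zero]
  zero_mem' := by
    intro y
    refine ⟨?_, ?_⟩ <;> simp
  smul_mem' := by
    intro c a ha y
    refine ⟨?_, ?_⟩
    · rw [map_smul, LinearMap.smul_apply, (ha y).1, smul_zero]
    · rw [map_smul, (ha y).2, smul_zero]

/-- The derived subalgebra `[L,L]`. -/
def leibDerived (β : L →ₗ[F] L →ₗ[F] L) : Submodule F L :=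
  Submodule.span F {x | ∃ a b : L, β a b = x}

/-- The lower central series: `leibGamma β 1 = ⊤`, `leibGamma β (k+1) = [L, leibGamma β k]`. -/
def leibGamma (β : L →ₗ[F] L →ₗ[F] L) : ℕ → Submodule F L
  | 0 => ⊤
  | 1 => ⊤
  | (n+2) => Submodule.span F {x | ∃ a b : L, b ∈ leibGamma β (n+1) ∧ β a b = x}

/-- The derived series: `leibDelta β 0 = ⊤`, `leibDelta β (n+1) = [leibDelta β n, leibDelta β n]`. -/
def leibDelta (β : L →ₗ[F] L →ₗ[F] L) : ℕ → Submodule F L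
  | 0 => ⊤
  | (n+1) => Submodule.span F
      {x | ∃ a ∈ leibDelta β n, ∃ b ∈ leibDelta β n, β a b = x}

/-- Multiplication table predicate: the brackets of the triple `a` are given by `t`. -/
def MulTbl (β : L →ₗ[F] L →ₗ[F] L) (a : Fin 3 → L) (t : Fin 3 → Fin 3 → L) : Prop :=
  ∀ i j, β (a i) (a j) = t i j

lemma pair_indep {v w : L} (hv : v ≠ 0) (hw : ∀ c : F, w ≠ c • v) :
    LinearIndependent F ![v, w] :=
  (LinearIndependent.pair_iff' hv).mpr fun c hc => hw c hc.symm

lemma pair_symm {v w : L} (h : LinearIndependent F ![v, w]) :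
    LinearIndependent F ![w, v] := by
  have := h.comp (Equiv.swap (0 : Fin 2) 1) (Equiv.injective _)
  convert this using 1
  ext i
  fin_cases i <;> simp [Equiv.swap_apply_def]

lemma pair_shear {v w : L} (c : F) (h : LinearIndependent F ![v, w]) :
    LinearIndependent F ![v, w + c • v] := by
  rw [LinearIndependent.pair_iff] at h ⊢
  intro s t hst
  have h2 := h (s + t * c) t (by linear_combination (norm := module) hst)
  exact ⟨by linear_combination h2.1 - c * h2.2, h2.2⟩

lemma auxBasis [FiniteDimensional F L] (hdim : finrank F L = 3)
    (β : L →ₗ[F] L →ₗ[F] L) (K : Submodule F L)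
    (hK0 : ∀ k ∈ K, ∀ y : L, β k y = 0)
    (b0 b1 b2 : L) (h1 : b1 ∈ K) (h2 : b2 ∈ K)
    (hind : LinearIndependent F ![b1, b2]) (hb0 : β b0 b0 ≠ 0) :
    ∃ b : Basis (Fin 3) F L, ⇑b = ![b0, b1, b2] := by
  have hb0K : b0 ∉ Submodule.span F (Set.range ![b1, b2]) := by
    intro h
    have hmem : b0 ∈ K := by
      refine Submodule.span_le.mpr ?_ h
      rintro x ⟨i, rfl⟩
      fin_cases i <;> simpa
    exact hb0 (hK0 b0 hmem b0)
  have hind3 : LinearIndependent F ![b0, b1, b2] := hind.fin_cons hb0K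
  exact ⟨basisOfLinearIndependentOfCardEqFinrank hind3 (by simp [hdim]),
    coe_basisOfLinearIndependentOfCardEqFinrank _ _⟩

theorem stmt7 (β : L →ₗ[F] L →ₗ[F] L) (hLeib : IsLeibniz β)
    (hdim : finrank F L = 3) (hnotLie : ∃ a : L, β a a ≠ 0)
    (hc : lzCenter β = ⊥) (hk : finrank F (leibKer β) = 2) :
    ∃ b : Basis (Fin 3) F L,
      (∃ β' : F, β' ≠ 0 ∧ MulTbl β ⇑b ![![b 1, b 1, β' • b 2], ![0, 0, 0], ![0, 0, 0]]) ∨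
      (∃ γ β' : F, γ ≠ 0 ∧ β' ≠ 0 ∧
        MulTbl β ⇑b ![![b 1, b 1 + γ • b 2, β' • b 2], ![0, 0, 0], ![0, 0, 0]]) ∨
      (∃ γ : F, γ ≠ 0 ∧ MulTbl β ⇑b ![![b 1, γ • b 2, b 2], ![0, 0, 0], ![0, 0, 0]]) ∨
      (∃ β' γ : F, Irreducible (X ^ 2 - C γ * X - C β' : F[X]) ∧
        MulTbl β ⇑b ![![b 1, b 2, β' • b 1 + γ • b 2], ![0, 0, 0], ![0, 0, 0]]) := by
  classical
  have hfd : FiniteDimensional F L := FiniteDimensional.of_finrank_pos (by rw [hdim]; norm_num)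
  obtain ⟨a, ha⟩ := hnotLie
  set K : Submodule F L := leibKer β with hKdef
  have hsqK : ∀ x : L, β x x ∈ K := fun x => Submodule.subset_span ⟨x, rfl⟩
  have hK0 : ∀ k ∈ K, ∀ y : L, β k y = 0 := by
    have hle : K ≤ LinearMap.ker β := by
      rw [hKdef]
      simp only [leibKer]
      rw [Submodule.span_le]
      rintro _ ⟨x, rfl⟩
      simp only [SetLike.mem_coe, LinearMap.mem_ker]
      ext c
      rw [hLeib x x c]
      simp
    intro k hk y
    have hz : β k = 0 := LinearMap.mem_ker.mp (hle hk)
    rw [hz]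
    simp
  have hsum : ∀ x y : L, β x y + β y x ∈ K := by
    intro x y
    have hexp : β x y + β y x = β (x + y) (x + y) - β x x - β y y := by
      simp only [map_add, LinearMap.add_apply]
      abel
    rw [hexp]
    exact Submodule.sub_mem _ (Submodule.sub_mem _ (hsqK _) (hsqK _)) (hsqK _)
  have hKcl : ∀ x : L, ∀ k ∈ K, β x k ∈ K := by
    intro x
    have hle : K ≤ Submodule.comap (β x) K := by
      conv_lhs => rw [hKdef]
      simp only [leibKer]
      rw [Submodule.span_le]
      rintro _ ⟨c, rfl⟩
      simp only [SetLike.mem_coe, Submodule.mem_comap]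
      have h1 : β x (β c c) = β (β x c) c + β c (β x c) := by
        rw [hLeib x c c]; abel
      rw [h1]
      exact hsum (β x c) c
    intro k hk
    exact Submodule.mem_comap.mp (hle hk)
  have haK : a ∉ K := fun h => ha (hK0 a h a)
  -- a global basis (a, k1, k2)
  let bK : Basis (Fin 2) F K := Module.finBasisOfFinrankEq F K hk
  have hk1 : (bK 0 : L) ∈ K := (bK 0).2
  have hk2 : (bK 1 : L) ∈ K := (bK 1).2
  have hindK : LinearIndependent F ![(bK 0 : L), (bK 1 : L)] := by
    have h0 := bK.linearIndependent.map' K.subtype (Submodule.ker_subtype K)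
    have e : ![(bK 0 : L), (bK 1 : L)] = ⇑K.subtype ∘ ⇑bK := by
      ext i
      fin_cases i <;> rfl
    rw [e]; exact h0
  have hindA : LinearIndependent F ![a, (bK 0 : L), (bK 1 : L)] := by
    refine hindK.fin_cons ?_
    intro h
    refine haK (Submodule.span_le.mpr ?_ h)
    rintro x ⟨i, rfl⟩
    fin_cases i <;> simpa
  have hspanA : ∀ x : L, x ∈ Submodule.span F (Set.range ![a, (bK 0 : L), (bK 1 : L)]) := by
    intro x
    have hs := (basisOfLinearIndependentOfCardEqFinrank hindA (by simp [hdim])).span_eq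
    rw [coe_basisOfLinearIndependentOfCardEqFinrank] at hs
    rw [hs]
    trivial
  have hDinj : ∀ k ∈ K, β a k = 0 → k = 0 := by
    intro k hk hak
    have hflip : ∀ y : L, β y k = 0 := by
      intro y
      refine Submodule.span_induction ?_ ?_ ?_ ?_ (hspanA y)
      · rintro x ⟨i, rfl⟩
        fin_cases i
        · simpa using hak
        · exact hK0 _ hk1 k
        · exact hK0 _ hk2 k
      · simp
      · intro u v _ _ hu hv
        rw [map_add, LinearMap.add_apply, hu, hv, add_zero]
      · intro c u _ hu
        rw [map_smul, LinearMap.smul_apply, hu, smul_zero]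
    have hcent : k ∈ lzCenter β := fun y => ⟨hK0 k hk y, hflip y⟩
    rw [hc] at hcent
    simpa using hcent
  have hDsurj : ∀ m ∈ K, ∃ k ∈ K, β a k = m := by
    have hrK : ∀ x : L, x ∈ K → β a x ∈ K := fun x hx => hKcl a x hx
    let D : K →ₗ[F] K := (β a).restrict hrK
    have hinj : Function.Injective D := by
      intro x y hxy
      have hsub : β a ((x : L) - y) = 0 := by
        rw [map_sub]
        have := congrArg (Subtype.val) hxy
        simp only [D, LinearMap.restrict_apply] at this
        rw [this]
        simp
      have := hDinj _ (Submodule.sub_mem K x.2 y.2) hsub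
      exact Subtype.ext (by rwa [← sub_eq_zero])
    have hsurj := LinearMap.injective_iff_surjective.mp hinj
    intro m hm
    obtain ⟨x, hx⟩ := hsurj ⟨m, hm⟩
    refine ⟨x, x.2, ?_⟩
    have := congrArg Subtype.val hx
    simpa [D, LinearMap.restrict_apply] using this
  have hspanPair : ∀ v w : L, v ∈ K → w ∈ K → LinearIndependent F ![v, w] →
      ∀ m ∈ K, ∃ s t : F, s • v + t • w = m := by
    intro v w hv hw hind m hm
    have hrange : Set.range ![v, w] = {v, w} := by
      ext x
      simp [Matrix.range_cons, Matrix.range_empty, or_comm]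
    have hle : Submodule.span F ({v, w} : Set L) ≤ K := by
      rw [Submodule.span_le]
      rintro x (rfl | rfl)
      · exact hv
      · exact hw
    have heq : Submodule.span F ({v, w} : Set L) = K := by
      apply Submodule.eq_of_le_of_finrank_le hle
      have h2 : finrank F (Submodule.span F ({v, w} : Set L)) = 2 := by
        rw [← hrange, finrank_span_eq_card hind]
        simp
      rw [h2, hk]
    rw [← heq] at hm
    exact Submodule.mem_span_pair.mp hm
  by_cases hev : ∃ μ : F, ∃ v : L, v ∈ K ∧ v ≠ 0 ∧ β a v = μ • v
  · -- eigenvector case: tables (i) and (ii)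
    obtain ⟨μ, v, hvK, hv0, hDv⟩ := hev
    have hμ : μ ≠ 0 := fun h => hv0 (hDinj v hvK (by rw [hDv, h, zero_smul]))
    obtain ⟨w, hwK, hw⟩ : ∃ w, w ∈ K ∧ ∀ c : F, w ≠ c • v := by
      by_contra hcon
      push_neg at hcon
      have hle : K ≤ Submodule.span F {v} := by
        intro x hx
        obtain ⟨c, rfl⟩ := hcon x hx
        exact Submodule.smul_mem _ c (Submodule.mem_span_singleton_self v)
      have hmono := Submodule.finrank_mono hle
      rw [hk, finrank_span_singleton hv0] at hmono
      omega
    have hindvw : LinearIndependent F ![v, w] := pair_indep hv0 hw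
    obtain ⟨s, t, hst⟩ := hspanPair v w hvK hwK hindvw (β a w) (hKcl a w hwK)
    have hqK : β a a ∈ K := hsqK a
    by_cases hcase : t = μ ∧ s ≠ 0
    · -- table (ii)
      obtain ⟨ht, hs⟩ := hcase
      obtain ⟨k, hkK, hak⟩ := hDsurj (μ • w - μ⁻¹ • β a a)
        (Submodule.sub_mem _ (Submodule.smul_mem _ _ hwK) (Submodule.smul_mem _ _ hqK))
      set b0 : L := μ⁻¹ • a + k with hb0def
      have hβb0 : ∀ x : L, β b0 x = μ⁻¹ • β a x := by
        intro x
        rw [hb0def, map_add, LinearMap.add_apply, hK0 k hkK x, add_zero, map_smul,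
          LinearMap.smul_apply]
      have hb00 : β b0 b0 = w := by
        rw [hβb0, hb0def, map_add, map_smul, hak]
        match_scalars <;> field_simp <;> ring
      have hbw : β b0 w = w + (μ⁻¹ * s) • v := by
        rw [hβb0, ← hst, ht]
        match_scalars <;> field_simp
      have hbv : β b0 v = v := by
        rw [hβb0, hDv, smul_smul, inv_mul_cancel₀ hμ, one_smul]
      have hw0 : w ≠ 0 := fun h => hw 0 (by rw [h, zero_smul])
      obtain ⟨b, hb⟩ := auxBasis hdim β K hK0 b0 w v hwK hvK (pair_symm hindvw)
        (by rw [hb00]; exact hw0)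
      refine ⟨b, Or.inr (Or.inl ⟨μ⁻¹ * s, 1, mul_ne_zero (inv_ne_zero hμ) hs, one_ne_zero, ?_⟩)⟩
      intro i j
      fin_cases i <;> fin_cases j <;>
        simp only [hb, Matrix.cons_val', Matrix.cons_val_zero, Matrix.cons_val_one,
          Matrix.head_cons, Matrix.head_fin_const, Matrix.cons_val_fin_one, Matrix.empty_val',
          Fin.isValue, one_smul] <;>
        first
          | exact hb00
          | exact hbw
          | exact hbv
          | exact hK0 _ hwK _
          | exact hK0 _ hvK _
    · -- table (i)
      have hsplit : ∃ w', w' ∈ K ∧ LinearIndependent F ![v, w'] ∧ ∃ ν : F, β a w' = ν • w' := by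
        by_cases hs : s = 0
        · refine ⟨w, hwK, hindvw, t, ?_⟩
          rw [← hst, hs, zero_smul, zero_add]
        · have ht : t ≠ μ := fun h => hcase ⟨h, hs⟩
          have hne : t - μ ≠ 0 := sub_ne_zero.mpr ht
          refine ⟨w + (s / (t - μ)) • v,
            Submodule.add_mem _ hwK (Submodule.smul_mem _ _ hvK),
            pair_shear _ hindvw, t, ?_⟩
          rw [map_add, map_smul, hDv, ← hst]
          match_scalars
          · field_simp
            ring
          · ring
      obtain ⟨w', hw'K, hindvw', ν, hDw'⟩ := hsplit
      have hw'0 : w' ≠ 0 := by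
        intro h
        exact hindvw'.ne_zero 1 (by simpa using h)
      have hν : ν ≠ 0 := fun h => hw'0 (hDinj w' hw'K (by rw [hDw', h, zero_smul]))
      obtain ⟨k, hkK, hak⟩ := hDsurj (μ • v - μ⁻¹ • β a a)
        (Submodule.sub_mem _ (Submodule.smul_mem _ _ hvK) (Submodule.smul_mem _ _ hqK))
      set b0 : L := μ⁻¹ • a + k with hb0def
      have hβb0 : ∀ x : L, β b0 x = μ⁻¹ • β a x := by
        intro x
        rw [hb0def, map_add, LinearMap.add_apply, hK0 k hkK x, add_zero, map_smul,
          LinearMap.smul_apply]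
      have hb00 : β b0 b0 = v := by
        rw [hβb0, hb0def, map_add, map_smul, hak]
        match_scalars <;> field_simp <;> ring
      have hbv : β b0 v = v := by
        rw [hβb0, hDv, smul_smul, inv_mul_cancel₀ hμ, one_smul]
      have hbw : β b0 w' = (μ⁻¹ * ν) • w' := by
        rw [hβb0, hDw', smul_smul]
      obtain ⟨b, hb⟩ := auxBasis hdim β K hK0 b0 v w' hvK hw'K hindvw'
        (by rw [hb00]; exact hv0)
      refine ⟨b, Or.inl ⟨μ⁻¹ * ν, mul_ne_zero (inv_ne_zero hμ) hν, ?_⟩⟩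
      intro i j
      fin_cases i <;> fin_cases j <;>
        simp only [hb, Matrix.cons_val', Matrix.cons_val_zero, Matrix.cons_val_one,
          Matrix.head_cons, Matrix.head_fin_const, Matrix.cons_val_fin_one, Matrix.empty_val',
          Fin.isValue] <;>
        first
          | exact hb00
          | exact hbv
          | exact hbw
          | exact hK0 _ hvK _
          | exact hK0 _ hw'K _
  · -- no eigenvector: table (iv)
    push_neg at hev
    have hqK : β a a ∈ K := hsqK a
    have hDqK : β a (β a a) ∈ K := hKcl a _ hqK
    have hind : LinearIndependent F ![β a a, β a (β a a)] :=
      pair_indep ha fun c hc => hev c (β a a) hqK ha hc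
    obtain ⟨s, t, hst⟩ := hspanPair (β a a) (β a (β a a)) hqK hDqK hind
      (β a (β a (β a a))) (hKcl a _ hDqK)
    obtain ⟨b, hb⟩ := auxBasis hdim β K hK0 a (β a a) (β a (β a a)) hqK hDqK hind ha
    refine ⟨b, Or.inr (Or.inr (Or.inr ⟨s, t, ?_, ?_⟩))⟩
    · set p : F[X] := X ^ 2 - C t * X - C s with hp
      have hdeg : p.natDegree = 2 := by
        rw [hp]
        compute_degree!
      rw [Polynomial.irreducible_iff_roots_eq_zero_of_degree_le_three (by omega) (by omega)]
      have hp0 : p ≠ 0 := fun h => by simp [h] at hdeg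
      rw [Multiset.eq_zero_iff_forall_notMem]
      intro lam hlam
      rw [mem_roots hp0, IsRoot.def] at hlam
      have heval : lam ^ 2 - t * lam - s = 0 := by
        simpa [hp] using hlam
      have hv0 : β a (β a a) - lam • β a a ≠ 0 := by
        intro h
        rw [sub_eq_zero] at h
        exact hev lam (β a a) hqK ha h
      refine hev (t - lam) (β a (β a a) - lam • β a a)
        (Submodule.sub_mem K hDqK (Submodule.smul_mem K _ hqK)) hv0 ?_
      rw [map_sub, map_smul, ← hst]
      match_scalars
      · linear_combination -heval
      · ring
    · intro i j
      fin_cases i <;> fin_cases j <;>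
        simp only [hb, Matrix.cons_val', Matrix.cons_val_zero, Matrix.cons_val_one,
          Matrix.head_cons, Matrix.head_fin_const, Matrix.cons_val_fin_one, Matrix.empty_val',
          Fin.isValue] <;>
        first
          | rfl
          | exact hst.symm
          | exact hK0 _ hqK _
          | exact hK0 _ hDqK _
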